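/- Let σ = (x y; z t) ∈ SL₂(ℤ), j ∈ ℤ and D ≥ 1. Set μ := gcd(x+zj, D), m := ∏_{p|μ} p^{val_p(D)} (the μ-part of D) and n := D/m. Then: (i) gcd(x+zj, n) = 1; (ii) gcd(r(x+zj) − nz, m) = 1 for every r ∈ ℤ, and in particular gcd(m, z) = 1; (iii) gcd(x+zj, y+tj) = 1; (iv) gcd(y+tj, m) = 1. -/

import Mathlib

/-- The `μ`-part of `D`: the product, over the primes `p` dividing `μ`,
of `p ^ (val_p D)`. -/
def muPart (D μ : ℕ) : ℕ :=
  ∏ p ∈ D.primeFactors.filter (fun p => p ∣ μ), p ^ (D.factorization p)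

lemma muPart_dvd (D μ : ℕ) (hD : D ≠ 0) : muPart D μ ∣ D := by
  have h1 : muPart D μ ∣ ∏ p ∈ D.primeFactors, p ^ (D.factorization p) :=
    Finset.prod_dvd_prod_of_subset _ _ _ (Finset.filter_subset _ _)
  have h2 : ∏ p ∈ D.primeFactors, p ^ (D.factorization p) = D := by
    rw [← Nat.support_factorization]
    exact Nat.factorization_prod_pow_eq_self hD
  rwa [h2] at h1

lemma prime_dvd_muPart {D μ p : ℕ} (pp : p.Prime) (h : p ∣ muPart D μ) : p ∣ μ := by
  obtain ⟨q, hq, hpq⟩ := pp.prime.exists_mem_finset_dvd h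
  simp only [Finset.mem_filter] at hq
  have : p = q := (Nat.prime_dvd_prime_iff_eq pp (Nat.prime_of_mem_primeFactors hq.1)).mp
    (pp.dvd_of_dvd_pow hpq)
  exact this ▸ hq.2

lemma not_dvd_div_muPart {D μ p : ℕ} (hD : D ≠ 0) (pp : p.Prime) (hμ : p ∣ μ) (hpD : p ∣ D) :
    ¬ p ∣ D / muPart D μ := by
  intro hpn
  have hmem : p ∈ D.primeFactors.filter (fun p => p ∣ μ) := by
    simp [Nat.mem_primeFactors, pp, hpD, hD, hμ]
  have hk : p ^ (D.factorization p) ∣ muPart D μ := Finset.dvd_prod_of_mem _ hmem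
  have hmD : muPart D μ ∣ D := muPart_dvd D μ hD
  have hnm : D / muPart D μ * muPart D μ = D := Nat.div_mul_cancel hmD
  have hcontra : p ^ (D.factorization p + 1) ∣ D := by
    have h := mul_dvd_mul hpn hk
    rw [hnm] at h
    rwa [pow_succ']
  exact Nat.pow_succ_factorization_not_dvd hD pp hcontra

theorem stmt_1 (D : ℕ) (hD : 1 ≤ D) (x y z t j : ℤ)
    (hdet : x * t - z * y = 1) :
    let μ : ℕ := Int.gcd (x + z * j) (D : ℤ)
    let m : ℕ := muPart D μ
    let n : ℕ := D / m
    Int.gcd (x + z * j) (n : ℤ) = 1 ∧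
    (∀ r : ℤ, Int.gcd (r * (x + z * j) - (n : ℤ) * z) (m : ℤ) = 1) ∧
    Int.gcd (x + z * j) (y + t * j) = 1 ∧
    Int.gcd (y + t * j) (m : ℤ) = 1 := by
  intro μ m n
  have hD0 : D ≠ 0 := by omega
  set a : ℤ := x + z * j with ha
  set b : ℤ := y + t * j with hb
  have hab : IsCoprime a b := ⟨t, -z, by linear_combination hdet⟩
  have hcop : Int.gcd a b = 1 := Int.isCoprime_iff_gcd_eq_one.mp hab
  have hmD : m ∣ D := muPart_dvd D μ hD0
  have hnD : n ∣ D := Nat.div_dvd_of_dvd hmD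
  have hμdef : μ = Nat.gcd a.natAbs D := by
    simp [μ, Int.gcd]
    rfl
  -- p ∣ μ → (p:ℤ) ∣ a
  have hμa : ∀ p : ℕ, p ∣ μ → (p : ℤ) ∣ a := by
    intro p hp
    rw [hμdef] at hp
    exact Int.dvd_natAbs.mp (Int.natCast_dvd_natCast.mpr (hp.trans (Nat.gcd_dvd_left _ _)))
  have hμD : ∀ p : ℕ, p ∣ μ → p ∣ D := by
    intro p hp
    rw [hμdef] at hp
    exact hp.trans (Nat.gcd_dvd_right _ _)
  -- p prime ∣ m → ¬ (p:ℤ) ∣ z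
  have hmz : ∀ p : ℕ, p.Prime → p ∣ μ → ¬ (p : ℤ) ∣ z := by
    intro p pp hpμ hpz
    have hpa : (p : ℤ) ∣ a := hμa p hpμ
    have hpx : (p : ℤ) ∣ x := by
      have : (p : ℤ) ∣ a - z * j := dvd_sub hpa (hpz.mul_right j)
      simpa [ha] using this
    have : (p : ℤ) ∣ 1 := hdet ▸ dvd_sub (hpx.mul_right t) (hpz.mul_right y)
    have := Int.eq_one_of_dvd_one (by positivity) this
    simp at this
    exact pp.one_lt.ne' this
  refine ⟨?_, ?_, hcop, ?_⟩
  · -- gcd(a, n) = 1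
    rw [Nat.eq_one_iff_not_exists_prime_dvd]
    intro p pp hpg
    have hpg' : p ∣ Nat.gcd a.natAbs n := by
      simpa [Int.gcd] using hpg
    have hpa : p ∣ a.natAbs := hpg'.trans (Nat.gcd_dvd_left _ _)
    have hpn : p ∣ n := hpg'.trans (Nat.gcd_dvd_right _ _)
    have hpD : p ∣ D := hpn.trans hnD
    have hpμ : p ∣ μ := by rw [hμdef]; exact Nat.dvd_gcd hpa hpD
    exact not_dvd_div_muPart hD0 pp hpμ hpD hpn
  · -- ∀ r, gcd(r*a - n*z, m) = 1
    intro r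
    rw [Nat.eq_one_iff_not_exists_prime_dvd]
    intro p pp hpg
    have hpg' : p ∣ Nat.gcd (r * a - (n : ℤ) * z).natAbs m := by
      simpa [Int.gcd] using hpg
    have hpc : (p : ℤ) ∣ r * a - (n : ℤ) * z :=
      Int.dvd_natAbs.mp (Int.natCast_dvd_natCast.mpr (hpg'.trans (Nat.gcd_dvd_left _ _)))
    have hpm : p ∣ m := hpg'.trans (Nat.gcd_dvd_right _ _)
    have hpμ : p ∣ μ := prime_dvd_muPart pp hpm
    have hpa : (p : ℤ) ∣ a := hμa p hpμ
    have hpnz : (p : ℤ) ∣ (n : ℤ) * z := by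
      have : (p : ℤ) ∣ r * a - (r * a - (n : ℤ) * z) := dvd_sub (hpa.mul_left r) hpc
      simpa using this
    have ppz : Prime (p : ℤ) := Nat.prime_iff_prime_int.mp pp
    rcases ppz.dvd_mul.mp hpnz with h | h
    · exact not_dvd_div_muPart hD0 pp hpμ (hμD p hpμ) (Int.natCast_dvd_natCast.mp h)
    · exact hmz p pp hpμ h
  · -- gcd(b, m) = 1
    rw [Nat.eq_one_iff_not_exists_prime_dvd]
    intro p pp hpg
    have hpg' : p ∣ Nat.gcd b.natAbs m := by
      simpa [Int.gcd] using hpg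
    have hpb : p ∣ b.natAbs := hpg'.trans (Nat.gcd_dvd_left _ _)
    have hpμ : p ∣ μ := prime_dvd_muPart pp (hpg'.trans (Nat.gcd_dvd_right _ _))
    have hpa : p ∣ a.natAbs := by
      have := hμa p hpμ
      exact Int.natCast_dvd_natCast.mp (Int.dvd_natAbs.mpr this)
    have : p ∣ 1 := hcop ▸ Nat.dvd_gcd hpa hpb
    exact pp.one_lt.ne' (Nat.dvd_one.mp this)
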